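/- arXiv:2202.06904 — 2 statements merged into one kernel-verified Lean document; each statement's English description precedes it below -/
import Mathlib

section
/- Let s ≥ 1, let 1 < i_1 < i_2 < ⋯ < i_s be a strictly increasing sequence of integers all greater than 1, let K = ∏_{k=1}^s (x, y^{i_k}) ⊆ ℂ[x,y], and let n ≥ 1 be a positive integer. Then dim_ℂ ℂ[x,y]/(K · m^n) = dim_ℂ ℂ[x,y]/K + (n(n+1) + 2ns)/2. -/
open MvPolynomial

/-- The maximal ideal `m = (x, y)` of the origin in `ℂ[x,y]`. -/
noncomputable def mxy : Ideal (MvPolynomial (Fin 2) ℂ) :=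
  Ideal.span {X 0, X 1}

open MvPolynomial Finset Pointwise
noncomputable section CTaux
namespace CT

def E2 (p : ℕ × ℕ) : Fin 2 →₀ ℕ := Finsupp.single 0 p.1 + Finsupp.single 1 p.2
@[simp] lemma E2_apply0 (p : ℕ × ℕ) : E2 p 0 = p.1 := by simp [E2, Finsupp.single_apply]
@[simp] lemma E2_apply1 (p : ℕ × ℕ) : E2 p 1 = p.2 := by simp [E2, Finsupp.single_apply]
lemma E2_surj (t : Fin 2 →₀ ℕ) : E2 (t 0, t 1) = t := by
  ext j; fin_cases j <;> simp [E2, Finsupp.single_apply]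
lemma E2_inj : Function.Injective E2 := by
  intro p q h
  have h0 : E2 p 0 = E2 q 0 := by rw [h]
  have h1 : E2 p 1 = E2 q 1 := by rw [h]
  simp only [E2_apply0, E2_apply1] at h0 h1
  exact Prod.ext h0 h1
lemma E2_bij : Function.Bijective E2 :=
  ⟨E2_inj, fun t => ⟨(t 0, t 1), E2_surj t⟩⟩
lemma E2_add (p q : ℕ × ℕ) : E2 (p + q) = E2 p + E2 q := by
  ext j; fin_cases j <;> simp
def mon (p : ℕ × ℕ) : MvPolynomial (Fin 2) ℂ := X 0 ^ p.1 * X 1 ^ p.2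
lemma mon_eq (p : ℕ × ℕ) : mon p = monomial (E2 p) 1 := by
  rw [mon, X_pow_eq_monomial, X_pow_eq_monomial, monomial_mul, one_mul]; rfl
lemma mon_mul (p q : ℕ × ℕ) : mon p * mon q = mon (p + q) := by
  simp only [mon, Prod.fst_add, Prod.snd_add, pow_add]; ring
def up (G : Set (ℕ × ℕ)) : Set (ℕ × ℕ) := {t | ∃ g ∈ G, g.1 ≤ t.1 ∧ g.2 ≤ t.2}
lemma subset_up (G : Set (ℕ × ℕ)) : G ⊆ up G := fun g hg => ⟨g, hg, le_rfl, le_rfl⟩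
lemma up_add_mem (G : Set (ℕ × ℕ)) {t : ℕ × ℕ} (u : ℕ × ℕ) (ht : t ∈ up G) :
    u + t ∈ up G := by
  obtain ⟨g, hg, h1, h2⟩ := ht
  exact ⟨g, hg, by simp; omega, by simp; omega⟩
lemma mon_mem {G : Set (ℕ × ℕ)} {t : ℕ × ℕ} (ht : t ∈ up G) :
    mon t ∈ Ideal.span (mon '' G) := by
  obtain ⟨g, hg, h1, h2⟩ := ht
  have : mon t = mon (t.1 - g.1, t.2 - g.2) * mon g := by
    rw [mon_mul]; congr 1; exact Prod.ext (by simp; omega) (by simp; omega)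
  rw [this]
  exact Ideal.mul_mem_left _ _ (Ideal.subset_span ⟨g, hg, rfl⟩)

-- NEW PART

lemma mem_restrictSupport_iff (D : Set (Fin 2 →₀ ℕ)) (p : MvPolynomial (Fin 2) ℂ) :
    p ∈ restrictSupport ℂ D ↔ ↑p.support ⊆ D := Iff.rfl

lemma mul_mem_restrictSupport (G : Set (ℕ × ℕ)) (r p : MvPolynomial (Fin 2) ℂ)
    (hp : p ∈ restrictSupport ℂ (E2 '' up G)) :
    r * p ∈ restrictSupport ℂ (E2 '' up G) := by
  classical
  rw [mem_restrictSupport_iff] at hp ⊢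
  intro t ht
  have ht' : t ∈ r.support + p.support := MvPolynomial.support_mul r p ht
  obtain ⟨u, hu, v, hv, rfl⟩ := Finset.mem_add.mp ht'
  obtain ⟨w, hw, rfl⟩ := hp hv
  refine ⟨(u 0, u 1) + w, up_add_mem G _ hw, ?_⟩
  rw [E2_add, E2_surj]

lemma restrict_eq (G : Set (ℕ × ℕ)) :
    (Ideal.span (mon '' G)).restrictScalars ℂ = restrictSupport ℂ (E2 '' up G) := by
  apply le_antisymm
  · intro p hp
    have hp' : p ∈ Submodule.span (MvPolynomial (Fin 2) ℂ) (mon '' G) := hp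
    refine Submodule.span_induction ?_ ?_ ?_ ?_ hp'
    · rintro x ⟨g, hg, rfl⟩
      rw [mem_restrictSupport_iff, mon_eq]
      intro t ht
      have := MvPolynomial.support_monomial_subset ht
      simp only [Finset.mem_singleton] at this
      subst this
      exact ⟨g, subset_up G hg, rfl⟩
    · exact Submodule.zero_mem _
    · exact fun x y _ _ hx hy => Submodule.add_mem _ hx hy
    · intro a x _ hx
      exact mul_mem_restrictSupport G a x hx
  · intro p hp
    rw [mem_restrictSupport_iff] at hp
    show p ∈ Ideal.span (mon '' G)
    rw [p.as_sum]
    refine Ideal.sum_mem _ fun t ht => ?_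
    obtain ⟨w, hw, ht'⟩ := hp ht
    have : monomial t (coeff t p) = C (coeff t p) * mon w := by
      rw [mon_eq, C_mul_monomial, mul_one, ht']
    rw [this]
    exact Ideal.mul_mem_left _ _ (mon_mem hw)

lemma finrank_quot (G : Set (ℕ × ℕ)) (B : Finset (ℕ × ℕ)) (hB : ↑B = (up G)ᶜ) :
    Module.finrank ℂ (MvPolynomial (Fin 2) ℂ ⧸ Ideal.span (mon '' G)) = B.card := by
  classical
  set D : Set (Fin 2 →₀ ℕ) := E2 '' up G with hD
  have hcompl : IsCompl (restrictSupport ℂ D : Submodule ℂ (MvPolynomial (Fin 2) ℂ))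
      (restrictSupport ℂ Dᶜ) := by
    constructor
    · rw [Submodule.disjoint_def]
      intro p h1 h2
      rw [mem_restrictSupport_iff] at h1 h2
      rw [← MvPolynomial.support_eq_empty]
      by_contra hne
      obtain ⟨t, ht⟩ := Finset.nonempty_iff_ne_empty.mpr hne
      exact h2 ht (h1 ht)
    · rw [codisjoint_iff, eq_top_iff]
      intro p _
      rw [p.as_sum]
      refine Submodule.sum_mem _ fun t _ => ?_
      by_cases ht : t ∈ D
      · refine Submodule.mem_sup_left ((mem_restrictSupport_iff _ _).mpr fun u hu => ?_)
        have := MvPolynomial.support_monomial_subset hu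
        rw [Finset.mem_singleton] at this
        subst this
        exact ht
      · refine Submodule.mem_sup_right ((mem_restrictSupport_iff _ _).mpr fun u hu => ?_)
        have := MvPolynomial.support_monomial_subset hu
        rw [Finset.mem_singleton] at this
        subst this
        exact ht
  have e1 : (MvPolynomial (Fin 2) ℂ ⧸ Ideal.span (mon '' G)) ≃ₗ[ℂ]
      (MvPolynomial (Fin 2) ℂ ⧸ (Ideal.span (mon '' G)).restrictScalars ℂ) :=
    (Submodule.Quotient.restrictScalarsEquiv ℂ _).symm
  have e2 : (MvPolynomial (Fin 2) ℂ ⧸ (Ideal.span (mon '' G)).restrictScalars ℂ) ≃ₗ[ℂ]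
      (MvPolynomial (Fin 2) ℂ ⧸ restrictSupport ℂ D) :=
    Submodule.quotEquivOfEq _ _ (restrict_eq G)
  have e3 : (MvPolynomial (Fin 2) ℂ ⧸ restrictSupport ℂ D) ≃ₗ[ℂ] restrictSupport ℂ Dᶜ :=
    Submodule.quotientEquivOfIsCompl _ _ hcompl
  have e4 : (restrictSupport ℂ Dᶜ : Submodule ℂ (MvPolynomial (Fin 2) ℂ)) ≃ₗ[ℂ] (↥(Dᶜ) →₀ ℂ) :=
    (basisRestrictSupport ℂ _).repr
  have hDc : Dᶜ = ↑(B.image E2) := by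
    rw [hD, ← Set.image_compl_eq E2_bij, ← hB, Finset.coe_image]
  have hfin : Dᶜ.Finite := by rw [hDc]; exact (B.image E2).finite_toSet
  haveI : Fintype ↥(Dᶜ) := hfin.fintype
  rw [(e1.trans (e2.trans (e3.trans e4))).finrank_eq, Module.finrank_finsupp_self]
  calc Fintype.card ↥(Dᶜ) = Nat.card ↥(Dᶜ) := Fintype.card_eq_nat_card
    _ = Dᶜ.ncard := (Nat.card_coe_set_eq _)
    _ = (B.image E2).card := by rw [hDc, Set.ncard_coe_finset]
    _ = B.card := Finset.card_image_of_injective _ E2_inj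
-- partial sums
def esum (i : ℕ → ℕ) (j : ℕ) : ℕ := ∑ k ∈ Finset.Icc 1 j, i k

lemma esum_zero (i : ℕ → ℕ) : esum i 0 = 0 := by simp [esum]

lemma esum_succ (i : ℕ → ℕ) (j : ℕ) : esum i (j + 1) = esum i j + i (j + 1) := by
  rw [esum, esum, Finset.sum_Icc_succ_top (by omega)]

section mono
variable {i : ℕ → ℕ} {s : ℕ} (hi1 : 1 < i 1)
  (hmono : ∀ k, 1 ≤ k → k < s → i k < i (k + 1))

include hmono in
lemma i_mono : ∀ a b, 1 ≤ a → a ≤ b → b ≤ s → i a ≤ i b := by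
  intro a b ha hab hbs
  induction b with
  | zero => omega
  | succ m ih =>
    rcases Nat.lt_or_ge a (m + 1) with h | h
    · have h1 : i a ≤ i m := ih (by omega) (by omega)
      have h2 : i m < i (m + 1) := hmono m (by omega) (by omega)
      omega
    · have : a = m + 1 := by omega
      subst this
      exact le_rfl

include hi1 hmono in
lemma i_pos : ∀ k, 1 ≤ k → k ≤ s → 1 ≤ i k := by
  intro k hk hks
  have := i_mono hmono 1 k le_rfl hk hks
  omega

include hi1 hmono in
lemma esum_mono_add : ∀ a b, a ≤ b → b ≤ s → esum i a + (b - a) ≤ esum i b := by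
  intro a b hab hbs
  induction b with
  | zero =>
    have : a = 0 := by omega
    subst this
    simp
  | succ m ih =>
    rcases Nat.lt_or_ge a (m + 1) with h | h
    · have h1 := ih (by omega) (by omega)
      have h2 := esum_succ i m
      have h3 := i_pos hi1 hmono (m + 1) (by omega) (by omega)
      omega
    · have : a = m + 1 := by omega
      subst this
      omega

end mono

-- generator sets
def G1 (i : ℕ → ℕ) (m : ℕ) : Set (ℕ × ℕ) := (fun j => (m - j, esum i j)) '' Set.Iic m
def G2 (n : ℕ) : Set (ℕ × ℕ) := {q | q.1 + q.2 = n}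

lemma mon_image_mul (A B : Set (ℕ × ℕ)) : (mon '' A) * (mon '' B) = mon '' (A + B) := by
  ext x
  simp only [Set.mem_mul, Set.mem_image, Set.mem_add]
  constructor
  · rintro ⟨_, ⟨a, ha, rfl⟩, _, ⟨b, hb, rfl⟩, rfl⟩
    exact ⟨a + b, ⟨a, ha, b, hb, rfl⟩, (mon_mul a b).symm⟩
  · rintro ⟨_, ⟨a, ha, b, hb, rfl⟩, rfl⟩
    exact ⟨mon a, ⟨a, ha, rfl⟩, mon b, ⟨b, hb, rfl⟩, mon_mul a b⟩

lemma span_pair (c : ℕ) :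
    Ideal.span {(X 0 : MvPolynomial (Fin 2) ℂ), X 1 ^ c} = Ideal.span (mon '' {(1, 0), (0, c)}) := by
  congr 1
  rw [Set.image_pair]
  congr 1 <;> simp [mon]


lemma span_up_le {A B : Set (ℕ × ℕ)} (h : A ⊆ up B) :
    Ideal.span (mon '' A) ≤ Ideal.span (mon '' B) := by
  rw [Ideal.span_le]
  rintro _ ⟨a, ha, rfl⟩
  exact mon_mem (h ha)

lemma prod_eq {i : ℕ → ℕ} {s : ℕ} (hmono : ∀ k, 1 ≤ k → k < s → i k < i (k + 1)) :
    ∀ m, m ≤ s →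
      ∏ k ∈ Finset.Icc 1 m, Ideal.span {(X 0 : MvPolynomial (Fin 2) ℂ), X 1 ^ i k}
        = Ideal.span (mon '' G1 i m) := by
  intro m
  induction m with
  | zero =>
    intro _
    have h0 : Finset.Icc 1 0 = (∅ : Finset ℕ) := by decide
    rw [h0, Finset.prod_empty]
    have h1 : G1 i 0 = {(0, 0)} := by
      ext q
      simp only [G1, Set.mem_image, Set.mem_Iic, Set.mem_singleton_iff]
      constructor
      · rintro ⟨j, hj, rfl⟩
        have : j = 0 := by omega
        subst this
        simp [esum_zero]
      · rintro rfl
        exact ⟨0, le_rfl, by simp [esum_zero]⟩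
    rw [h1, Set.image_singleton]
    have : mon (0, 0) = 1 := by simp [mon]
    rw [this, Ideal.span_singleton_one, Ideal.one_eq_top]
  | succ m ih =>
    intro hm
    rw [Finset.prod_Icc_succ_top (by omega), ih (by omega), span_pair,
      Ideal.span_mul_span', mon_image_mul]
    apply le_antisymm
    · apply span_up_le
      rintro q ⟨a, ⟨j, hj, rfl⟩, b, hb, rfl⟩
      simp only [Set.mem_Iic] at hj
      rcases hb with rfl | rfl
      · -- b = (1,0)
        refine ⟨(m + 1 - j, esum i j), ⟨j, Set.mem_Iic.mpr (by omega), rfl⟩, ?_, ?_⟩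
        · show m + 1 - j ≤ m - j + 1
          omega
        · show esum i j ≤ esum i j + 0
          omega
      · -- b = (0, i (m+1))
        refine ⟨(m + 1 - (j + 1), esum i (j + 1)), ⟨j + 1, Set.mem_Iic.mpr (by omega), rfl⟩,
          ?_, ?_⟩
        · show m + 1 - (j + 1) ≤ m - j + 0
          omega
        · show esum i (j + 1) ≤ esum i j + i (m + 1)
          have h1 := esum_succ i j
          have h2 := i_mono (s := s) hmono (j + 1) (m + 1) (by omega) (by omega) (by omega)
          omega
    · apply span_up_le
      rintro q ⟨j, hj, rfl⟩
      simp only [Set.mem_Iic] at hj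
      rcases Nat.lt_or_ge j (m + 1) with h | h
      · refine ⟨((m - j, esum i j) : ℕ × ℕ) + (1, 0),
          ⟨(m - j, esum i j), ⟨j, Set.mem_Iic.mpr (by omega), rfl⟩, (1, 0), Or.inl rfl, rfl⟩,
          ?_, ?_⟩
        · show m - j + 1 ≤ m + 1 - j
          omega
        · show esum i j + 0 ≤ esum i j
          omega
      · have : j = m + 1 := by omega
        subst this
        refine ⟨((m - m, esum i m) : ℕ × ℕ) + (0, i (m + 1)),
          ⟨(m - m, esum i m), ⟨m, Set.mem_Iic.mpr (by omega), rfl⟩, (0, i (m + 1)),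
            Or.inr rfl, rfl⟩, ?_, ?_⟩
        · show m - m + 0 ≤ m + 1 - (m + 1)
          omega
        · show esum i m + i (m + 1) ≤ esum i (m + 1)
          have := esum_succ i m
          omega

lemma pow_eq (n : ℕ) :
    (Ideal.span {(X 0 : MvPolynomial (Fin 2) ℂ), X 1}) ^ n = Ideal.span (mon '' G2 n) := by
  induction n with
  | zero =>
    rw [pow_zero]
    have h1 : G2 0 = {(0, 0)} := by
      ext q
      simp only [G2, Set.mem_setOf_eq, Set.mem_singleton_iff]
      constructor
      · intro h
        exact Prod.ext (by omega) (by omega)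
      · rintro rfl; rfl
    rw [h1, Set.image_singleton]
    have : mon (0, 0) = 1 := by simp [mon]
    rw [this, Ideal.span_singleton_one, Ideal.one_eq_top]
  | succ n ih =>
    rw [pow_succ, ih]
    have h2 : Ideal.span {(X 0 : MvPolynomial (Fin 2) ℂ), X 1}
        = Ideal.span (mon '' {(1, 0), (0, 1)}) := by
      have := span_pair 1
      rwa [pow_one] at this
    rw [h2, Ideal.span_mul_span', mon_image_mul]
    have hset : G2 n + ({(1, 0), (0, 1)} : Set (ℕ × ℕ)) = G2 (n + 1) := by
      ext q
      constructor
      · rintro ⟨a, ha, b, hb, rfl⟩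
        have ha' : a.1 + a.2 = n := ha
        rcases hb with rfl | rfl
        · have : (a + ((1, 0) : ℕ × ℕ)) ∈ G2 (n + 1) := by
            simp only [G2, Set.mem_setOf_eq, Prod.fst_add, Prod.snd_add]
            omega
          exact this
        · have : (a + ((0, 1) : ℕ × ℕ)) ∈ G2 (n + 1) := by
            simp only [G2, Set.mem_setOf_eq, Prod.fst_add, Prod.snd_add]
            omega
          exact this
      · intro hq
        have hq' : q.1 + q.2 = n + 1 := hq
        rcases Nat.eq_zero_or_pos q.1 with h | h
        · refine ⟨(q.1, q.2 - 1), show q.1 + (q.2 - 1) = n by omega, (0, 1), Or.inr rfl, ?_⟩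
          exact Prod.ext (by simp) (by show q.2 - 1 + 1 = q.2; omega)
        · refine ⟨(q.1 - 1, q.2), show q.1 - 1 + q.2 = n by omega, (1, 0), Or.inl rfl, ?_⟩
          exact Prod.ext (by show q.1 - 1 + 1 = q.1; omega) (by simp)
    rw [hset]


/-- staircase finset: columns `a < c`, heights `H a` -/
def stair (c : ℕ) (H : ℕ → ℕ) : Finset (ℕ × ℕ) :=
  (Finset.range c).biUnion fun a => {a} ×ˢ Finset.range (H a)

lemma mem_stair {c : ℕ} {H : ℕ → ℕ} {t : ℕ × ℕ} :
    t ∈ stair c H ↔ t.1 < c ∧ t.2 < H t.1 := by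
  simp only [stair, Finset.mem_biUnion, Finset.mem_range, Finset.mem_product,
    Finset.mem_singleton]
  constructor
  · rintro ⟨a, ha, h1, h2⟩
    subst h1
    exact ⟨ha, h2⟩
  · rintro ⟨h1, h2⟩
    exact ⟨t.1, h1, rfl, h2⟩

lemma card_stair (c : ℕ) (H : ℕ → ℕ) : (stair c H).card = ∑ a ∈ Finset.range c, H a := by
  rw [stair, Finset.card_biUnion]
  · apply Finset.sum_congr rfl
    intro a _
    rw [Finset.card_product, Finset.card_singleton, Finset.card_range, one_mul]
  · intro a _ b _ hab
    rw [Function.onFun, Finset.disjoint_left]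
    intro t ht ht'
    rw [Finset.mem_product, Finset.mem_singleton] at ht ht'
    exact hab (ht.1 ▸ ht'.1.symm ▸ rfl)

section staircases
variable {i : ℕ → ℕ} {s : ℕ} (hi1 : 1 < i 1)
  (hmono : ∀ k, 1 ≤ k → k < s → i k < i (k + 1))

include hi1 hmono in
lemma compl_G1 (hs : 1 ≤ s) :
    ↑(stair s fun a => esum i (s - a)) = (up (G1 i s))ᶜ := by
  ext t
  simp only [Finset.coe_biUnion, Set.mem_compl_iff, Finset.mem_coe, mem_stair]
  constructor
  · rintro ⟨h1, h2⟩ ⟨g, ⟨j, hj, rfl⟩, hg1, hg2⟩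
    simp only [Set.mem_Iic] at hj
    have hg1' : s - j ≤ t.1 := hg1
    have hg2' : esum i j ≤ t.2 := hg2
    have h3 : s - t.1 ≤ j := by omega
    have h4 := esum_mono_add hi1 hmono (s - t.1) j h3 hj
    omega
  · intro h
    constructor
    · by_contra hc
      exact h ⟨(s - 0, esum i 0), ⟨0, Set.mem_Iic.mpr (by omega), rfl⟩, by omega,
        by rw [esum_zero]; omega⟩
    · by_contra hc
      refine h ⟨(s - (s - t.1), esum i (s - t.1)),
        ⟨s - t.1, Set.mem_Iic.mpr (by omega), rfl⟩, by omega, by omega⟩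

include hi1 hmono in
lemma compl_G1G2 (hs : 1 ≤ s) (n : ℕ) :
    ↑(stair (s + n) fun a => if a < s then esum i (s - a) + n else s + n - a)
      = (up (G1 i s + G2 n))ᶜ := by
  ext t
  simp only [Set.mem_compl_iff, Finset.mem_coe, mem_stair]
  constructor
  · rintro ⟨h1, h2⟩ ⟨g, ⟨a, ⟨j, hj, rfl⟩, q, hq, rfl⟩, hg1, hg2⟩
    simp only [Set.mem_Iic] at hj
    have hq' : q.1 + q.2 = n := hq
    have hg1' : s - j + q.1 ≤ t.1 := hg1
    have hg2' : esum i j + q.2 ≤ t.2 := hg2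
    rcases Nat.lt_or_ge t.1 s with h | h
    · rw [if_pos h] at h2
      have h3 : s - t.1 ≤ j := by omega
      have h4 := esum_mono_add hi1 hmono (s - t.1) j h3 hj
      omega
    · rw [if_neg (by omega)] at h2 
      have h4 := esum_mono_add hi1 hmono 0 j (by omega) hj
      rw [esum_zero] at h4
      omega
  · intro h
    rcases Nat.lt_or_ge t.1 (s + n) with h1 | h1
    · refine ⟨h1, ?_⟩
      by_contra hc
      push_neg at hc
      rcases Nat.lt_or_ge t.1 s with h3 | h3
      · rw [if_pos h3] at hc
        refine h ⟨(s - (s - t.1), esum i (s - t.1)) + (0, n),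
          ⟨(s - (s - t.1), esum i (s - t.1)), ⟨s - t.1, Set.mem_Iic.mpr (by omega), rfl⟩,
            (0, n), show (0 : ℕ) + n = n by omega, rfl⟩, ?_, ?_⟩
        · show s - (s - t.1) + 0 ≤ t.1
          omega
        · show esum i (s - t.1) + n ≤ t.2
          omega
      · rw [if_neg (by omega)] at hc
        refine h ⟨(s - 0, esum i 0) + (t.1 - s, n - (t.1 - s)),
          ⟨(s - 0, esum i 0), ⟨0, Set.mem_Iic.mpr (by omega), rfl⟩,
            (t.1 - s, n - (t.1 - s)), show t.1 - s + (n - (t.1 - s)) = n by omega, rfl⟩,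
          ?_, ?_⟩
        · show s - 0 + (t.1 - s) ≤ t.1
          omega
        · show esum i 0 + (n - (t.1 - s)) ≤ t.2
          rw [esum_zero]
          omega
    · exfalso
      refine h ⟨(s - 0, esum i 0) + (n, 0),
        ⟨(s - 0, esum i 0), ⟨0, Set.mem_Iic.mpr (by omega), rfl⟩, (n, 0),
          show n + 0 = n by omega, rfl⟩, ?_, ?_⟩
      · show s - 0 + n ≤ t.1
        omega
      · show esum i 0 + 0 ≤ t.2
        rw [esum_zero]
        omega

end staircases


end CT
end CTaux

open CT in
/-- For a monomial tower `K = ∏_{k=1}^s (x, y^{iₖ})` with `1 < i₁ < ⋯ < i_s` and any `n ≥ 1`,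
one has `dim_ℂ ℂ[x,y]/(K·m^n) = dim_ℂ ℂ[x,y]/K + (n(n+1) + 2ns)/2`. -/
theorem colength_tower_mul_power_of_max_ideal (s : ℕ) (hs : 1 ≤ s) (i : ℕ → ℕ) (hi1 : 1 < i 1)
    (hmono : ∀ k, 1 ≤ k → k < s → i k < i (k + 1)) (n : ℕ) (hn : 1 ≤ n) :
    Module.finrank ℂ
      (MvPolynomial (Fin 2) ℂ ⧸
        ((∏ k ∈ Finset.Icc 1 s,
            Ideal.span {(X 0 : MvPolynomial (Fin 2) ℂ), X 1 ^ i k}) * mxy ^ n)) =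
    Module.finrank ℂ
      (MvPolynomial (Fin 2) ℂ ⧸
        ∏ k ∈ Finset.Icc 1 s,
          Ideal.span {(X 0 : MvPolynomial (Fin 2) ℂ), X 1 ^ i k}) +
    (n * (n + 1) + 2 * n * s) / 2 := by
  classical
  have hK := prod_eq (i := i) (s := s) hmono s le_rfl
  have hpow : mxy ^ n = Ideal.span (mon '' G2 n) := pow_eq n
  have hKm : (∏ k ∈ Finset.Icc 1 s,
        Ideal.span {(X 0 : MvPolynomial (Fin 2) ℂ), X 1 ^ i k}) * mxy ^ n
      = Ideal.span (mon '' (G1 i s + G2 n)) := by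
    rw [hK, hpow, Ideal.span_mul_span', mon_image_mul]
  rw [hKm, hK,
    finrank_quot _ _ (compl_G1G2 hi1 hmono hs n),
    finrank_quot _ _ (compl_G1 hi1 hmono hs),
    card_stair, card_stair]
  rw [Finset.sum_range_add (fun a => if a < s then esum i (s - a) + n else s + n - a) s n]
  have hA : ∑ a ∈ Finset.range s, (if a < s then esum i (s - a) + n else s + n - a)
      = (∑ a ∈ Finset.range s, esum i (s - a)) + s * n := by
    calc ∑ a ∈ Finset.range s, (if a < s then esum i (s - a) + n else s + n - a)
        = ∑ a ∈ Finset.range s, (esum i (s - a) + n) :=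
          Finset.sum_congr rfl fun a ha => if_pos (Finset.mem_range.mp ha)
      _ = (∑ a ∈ Finset.range s, esum i (s - a)) + ∑ _a ∈ Finset.range s, n :=
          Finset.sum_add_distrib
      _ = (∑ a ∈ Finset.range s, esum i (s - a)) + s * n := by
          rw [Finset.sum_const, Finset.card_range, smul_eq_mul]
  have hB : ∑ x ∈ Finset.range n, (if s + x < s then esum i (s - (s + x)) + n else s + n - (s + x))
      = ∑ x ∈ Finset.range n, (n - x) := by
    refine Finset.sum_congr rfl fun x hx => ?_
    rw [if_neg (by omega)]
    omega
  rw [hA, hB]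
  have hT : (∑ x ∈ Finset.range n, (n - x)) * 2 = n * (n + 1) := by
    have h1 : ∑ x ∈ Finset.range n, (n - x) = ∑ x ∈ Finset.range (n + 1), x := by
      rw [Finset.sum_range_succ' (fun x => x) n]
      have : ∑ x ∈ Finset.range n, (n - x) = ∑ x ∈ Finset.range n, (x + 1) := by
        rw [← Finset.sum_range_reflect (fun j => j + 1) n]
        refine Finset.sum_congr rfl fun x hx => ?_
        have := Finset.mem_range.mp hx
        omega
      rw [this]
      simp
    rw [h1, Finset.sum_range_id_mul_two (n + 1)]
    simp [Nat.mul_comm]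
  have hdiv : (n * (n + 1) + 2 * n * s) / 2
      = (∑ x ∈ Finset.range n, (n - x)) + n * s := by
    have h2 : n * (n + 1) + 2 * n * s = ((∑ x ∈ Finset.range n, (n - x)) + n * s) * 2 := by
      rw [← hT]
      ring
    rw [h2, Nat.mul_div_cancel _ (by omega)]
  rw [hdiv]
  have : s * n = n * s := Nat.mul_comm s n
  omega
end

section
/- Let S be a commutative Noetherian ring equipped with an ℕ-grading (a GradedRing structure 𝒜 on S), and let 𝔭 ⊆ S be a homogeneous prime ideal which is a minimal prime of S and such that there exists a homogeneous element of degree 1 not belonging to 𝔭. Then the length of the localization S_𝔭 as a module over itself equals the length of the homogeneous localization S_(𝔭) (the degree-zero part of the localization at homogeneous elements outside 𝔭) as a module over itself. -/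
section ChainBound

open Order

lemma LTSeries.length_le_of_covby_chain {L : Type*} [Lattice L] [IsModularLattice L] [OrderBot L]
    (c : ℕ → L) (hc0 : c 0 = ⊥) :
    ∀ n, (∀ i < n, c i ⋖ c (i + 1)) → ∀ p : LTSeries L, p.last ≤ c n → p.length ≤ n := by
  intro n
  induction n with
  | zero =>
    intro _ p hp
    by_contra h
    have h1 : p.head < p.last := p.strictMono (by
      show (0 : Fin _) < Fin.last _
      simp [Fin.lt_def]; omega)
    rw [hc0] at hp
    exact absurd (lt_of_lt_of_le h1 hp) (by simp)
  | succ n ih =>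
    intro hstep p hp
    classical
    have ih' := ih (fun i hi => hstep i (by omega))
    set N := c n with hNdef
    have hN : N ⋖ c (n + 1) := hstep n (by omega)
    by_cases hlast : p.last ≤ N
    · exact (ih' p hlast).trans (by omega)
    by_cases hlen0 : p.length = 0
    · omega
    have hlen : 1 ≤ p.length := by omega
    -- least index whose entry is not ≤ N
    have hQex : ∃ j, ∀ hj : j < p.length + 1, ¬ p ⟨j, hj⟩ ≤ N := by
      refine ⟨p.length, fun hj h => hlast ?_⟩
      simpa [RelSeries.last, Fin.last] using h
    set k := Nat.find hQex with hkdef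
    have hkspec := Nat.find_spec hQex
    have hk_le : k ≤ p.length := by
      refine Nat.find_le ?_
      refine fun hj h => hlast ?_
      simpa [RelSeries.last, Fin.last] using h
    have hlt : ∀ (i : ℕ) (h : i < p.length + 1), i < k → p ⟨i, h⟩ ≤ N := by
      intro i h hik
      have := Nat.find_min hQex hik
      push_neg at this
      obtain ⟨hj, hle⟩ := this
      exact hle
    have hge : ∀ (i : ℕ) (h : i < p.length + 1), k ≤ i → ¬ p ⟨i, h⟩ ≤ N := by
      intro i h hki hle
      refine hkspec (by omega) (le_trans ?_ hle)
      exact p.monotone (show (⟨k, by omega⟩ : Fin _) ≤ ⟨i, h⟩ by simp [Fin.mk_le_mk]; omega)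
    have hsup : ∀ (i : ℕ) (h : i < p.length + 1), k ≤ i → p ⟨i, h⟩ ⊔ N = c (n + 1) := by
      intro i h hki
      have h1 : N < p ⟨i, h⟩ ⊔ N := by
        rcases lt_or_eq_of_le (le_sup_right : N ≤ p ⟨i, h⟩ ⊔ N) with h' | h'
        · exact h'
        · exact absurd (sup_eq_right.mp h'.symm) (hge i h hki)
      have h2 : p ⟨i, h⟩ ⊔ N ≤ c (n + 1) :=
        sup_le (le_trans (p.monotone (Fin.le_last _)) hp) hN.le
      exact h2.eq_of_not_lt (hN.2 h1)
    have hinf : ∀ (i j : ℕ) (hi : i < p.length + 1) (hj : j < p.length + 1), k ≤ i → i < j →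
        p ⟨i, hi⟩ ⊓ N < p ⟨j, hj⟩ ⊓ N := by
      intro i j hi hj hki hij
      refine inf_lt_inf_of_lt_of_sup_le_sup (p.strictMono ?_) ?_
      · simp [Fin.lt_def]; omega
      · rw [hsup i hi hki, hsup j hj (by omega)]
    -- build the shorter series
    set q : LTSeries L := ⟨p.length - 1,
      fun i => if h : (i : ℕ) < k then p ⟨i, by omega⟩ else p ⟨(i : ℕ) + 1, by omega⟩ ⊓ N,
      by
        intro i
        have him : (i : ℕ) < p.length - 1 := i.2
        by_cases h1 : (i : ℕ) + 1 < k
        · simp only [Fin.coe_castSucc, Fin.val_succ, dif_pos h1, dif_pos (by omega : (i:ℕ) < k)]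
          exact p.strictMono (by simp [Fin.lt_def])
        · by_cases h2 : (i : ℕ) < k
          · simp only [Fin.coe_castSucc, Fin.val_succ, dif_pos h2, dif_neg h1]
            calc p ⟨(i:ℕ), by omega⟩ ≤ p ⟨(i:ℕ)+1, by omega⟩ ⊓ N := by
                  refine le_inf (p.monotone (by simp [Fin.le_def])) (hlt _ _ h2)
              _ < p ⟨(i:ℕ)+2, by omega⟩ ⊓ N := by
                  refine hinf _ _ _ _ (by omega) (by omega)
          · simp only [Fin.coe_castSucc, Fin.val_succ, dif_neg h2, dif_neg h1]
            exact hinf _ _ _ _ (by omega) (by omega)⟩ with hqdef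
    have hqlast : q.last ≤ N := by
      show q.toFun (Fin.last _) ≤ N
      simp only [hqdef, Fin.last]
      by_cases h : p.length - 1 < k
      · refine (dif_pos h).trans_le ?_
        exact hlt _ _ (by omega)
      · exact (dif_neg h).trans_le inf_le_right
    have := ih' q hqlast
    have : p.length - 1 ≤ n := this
    omega

end ChainBound

section CovByMap

lemma Ideal.map_covBy_map {A B : Type*} [CommRing A] [CommRing B] [IsLocalRing A] [IsLocalRing B]
    (φ : A →+* B)
    (hcomap : ∀ I : Ideal A, (I.map φ).comap φ = I)
    (hmax : (IsLocalRing.maximalIdeal A).map φ = IsLocalRing.maximalIdeal B)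
    {I K : Ideal A} (hIK : I ⋖ K) : I.map φ ⋖ K.map φ := by
  obtain ⟨x, hxK, hxI⟩ := SetLike.exists_of_lt hIK.1
  have hxspan : Ideal.span {x} ≤ K := by rwa [Ideal.span_le, Set.singleton_subset_iff]
  have hspan : I ⊔ Ideal.span {x} = K := by
    rcases hIK.eq_or_eq (c := I ⊔ Ideal.span {x}) le_sup_left (sup_le hIK.1.le hxspan) with h | h
    · exact absurd (h ▸ (le_sup_right (a := I)
        (Ideal.mem_span_singleton_self x))) hxI
    · exact h
  have hmx : IsLocalRing.maximalIdeal A * Ideal.span {x} ≤ I := by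
    rcases hIK.eq_or_eq (c := I ⊔ IsLocalRing.maximalIdeal A * Ideal.span {x}) le_sup_left
      (sup_le hIK.1.le ((Ideal.mul_le_right).trans hxspan)) with h | h
    · rw [← h]; exact le_sup_right
    · exfalso
      have hx' : x ∈ I ⊔ IsLocalRing.maximalIdeal A * Ideal.span {x} := h.symm ▸ hxK
      obtain ⟨i, hi, y, hy, hxy⟩ := Submodule.mem_sup.mp hx'
      obtain ⟨t, ht, hty⟩ := Ideal.mem_mul_span_singleton.mp hy
      have hunit : IsUnit (1 - t) :=
        IsLocalRing.isUnit_one_sub_self_of_mem_nonunits t ht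
      apply hxI
      have h1 : (1 - t) * x ∈ I := by
        have : (1 - t) * x = i := by rw [sub_mul, one_mul, hty, ← hxy]; ring
        rwa [this]
      have h2 := I.mul_mem_left (↑hunit.unit⁻¹) h1
      rwa [← mul_assoc, IsUnit.val_inv_mul, one_mul] at h2
  -- now prove the covering in B
  have hlt : I.map φ < K.map φ := by
    refine lt_of_le_of_ne (Ideal.map_mono hIK.1.le) fun h => ?_
    exact hIK.1.ne (by rw [← hcomap I, ← hcomap K, h])
  refine ⟨hlt, fun P h1 h2 => ?_⟩
  have hmapspan : K.map φ = I.map φ ⊔ Ideal.span {φ x} := by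
    rw [← hspan, Ideal.map_sup, Ideal.map_span, Set.image_singleton]
  obtain ⟨p, hpP, hpI⟩ := SetLike.exists_of_lt h1
  have hpK : p ∈ I.map φ ⊔ Ideal.span {φ x} := hmapspan ▸ (h2.le hpP)
  obtain ⟨j, hj, y, hy, hpy⟩ := Submodule.mem_sup.mp hpK
  obtain ⟨t, hty⟩ := Ideal.mem_span_singleton'.mp hy
  by_cases ht : IsUnit t
  · -- φ x ∈ P, so P = K.map φ, contradicting h2
    have hφx : φ x ∈ P := by
      have h3 : t * φ x ∈ P := by
        have : t * φ x = p - j := by rw [hty, ← hpy]; ring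
        rw [this]
        exact P.sub_mem hpP (h1.le hj)
      have h4 := P.mul_mem_left (↑ht.unit⁻¹) h3
      rwa [← mul_assoc, IsUnit.val_inv_mul, one_mul] at h4
    have : K.map φ ≤ P := by
      rw [hmapspan]
      exact sup_le h1.le (by rwa [Ideal.span_le, Set.singleton_subset_iff])
    exact absurd this h2.not_ge
  · -- t is in the maximal ideal, so p ∈ I.map φ, contradiction
    apply hpI
    have htm : t ∈ IsLocalRing.maximalIdeal B := ht
    have h5 : t * φ x ∈ I.map φ := by
      have h6 : t * φ x ∈ (IsLocalRing.maximalIdeal B) * Ideal.span {φ x} :=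
        Ideal.mul_mem_mul htm (Ideal.mem_span_singleton_self _)
      have h7 : (IsLocalRing.maximalIdeal B) * Ideal.span {φ x} ≤ I.map φ := by
        rw [← hmax, ← Set.image_singleton, ← Ideal.map_span, ← Ideal.map_mul]
        exact Ideal.map_mono hmx
      exact h7 h6
    have : p = j + t * φ x := by rw [hty, hpy]
    rw [this]
    exact (Ideal.map φ I).add_mem hj h5

end CovByMap

section Graded

open HomogeneousLocalization DirectSum


variable {S : Type*} [CommRing S] {𝒜 : ℕ → Submodule ℤ S} [GradedRing 𝒜]
  {𝔭 : Ideal S} [𝔭.IsPrime]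

omit [𝔭.IsPrime] in
lemma exists_component_not_mem (hhom : 𝔭.IsHomogeneous 𝒜) {w : S} (hw : w ∉ 𝔭) :
    ∃ e : ℕ, (decompose 𝒜 w e : S) ∉ 𝔭 := by
  by_contra h
  push_neg at h
  apply hw
  classical
  rw [← DirectSum.sum_support_decompose 𝒜 w]
  exact Ideal.sum_mem _ fun i _ => h i

lemma comap_map_algebraMap (hhom : 𝔭.IsHomogeneous 𝒜)
    (I : Ideal (HomogeneousLocalization.AtPrime 𝒜 𝔭)) :
    (I.map (algebraMap (HomogeneousLocalization.AtPrime 𝒜 𝔭) (Localization.AtPrime 𝔭))).comap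
      (algebraMap (HomogeneousLocalization.AtPrime 𝒜 𝔭) (Localization.AtPrime 𝔭)) = I := by
  classical
  set A' := HomogeneousLocalization.AtPrime 𝒜 𝔭 with hA'
  set B' := Localization.AtPrime 𝔭 with hB'
  set φ : A' →+* B' := (algebraMap A' B' : A' →+* B') with hφ
  refine le_antisymm ?_ Ideal.le_comap_map
  intro a ha
  rw [Ideal.mem_comap] at ha
  have ha' : (φ a : B') ∈ Submodule.span B' ((φ : A' → B') '' I) := ha
  obtain ⟨c, hsupp, hsum⟩ := Submodule.mem_span_set.mp ha'
  set T : Finset B' := c.support with hT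
  -- choose preimages in I
  have hex : ∀ b : {x // x ∈ T}, ∃ y : A', y ∈ I ∧ φ y = (b : B') := by
    rintro ⟨b, hb⟩
    obtain ⟨y, hyI, hyφ⟩ := hsupp hb
    exact ⟨y, hyI, hyφ⟩
  choose x hxI hxφ using hex
  -- clear denominators of the coefficients
  obtain ⟨u, hu⟩ := IsLocalization.exist_integer_multiples 𝔭.primeCompl T.attach
    (fun b => c (b : B'))
  choose r hr using fun b : {x // x ∈ T} => hu b (Finset.mem_attach _ _)
  -- notation
  set n := a.num with hn
  set d := a.den with hd
  set Δ : ℕ := ∑ b ∈ T.attach, (x b).deg with hΔ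
  set D : S := ∏ b ∈ T.attach, (x b).den with hD
  set Db : {x // x ∈ T} → S := fun b => ∏ b' ∈ T.attach.erase b, (x b').den with hDb
  set δ : {x // x ∈ T} → ℕ := fun b => ∑ b' ∈ T.attach.erase b, (x b').deg with hδ
  have hδΔ : ∀ b : {x // x ∈ T}, (x b).deg + δ b = Δ := by
    intro b
    simp only [hδ, hΔ]
    exact Finset.add_sum_erase T.attach (fun b' => (x b').deg) (Finset.mem_attach _ b)
  have hDsplit : ∀ b : {x // x ∈ T}, D = (x b).den * Db b := by
    intro b
    simp only [hD, hDb]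
    exact (Finset.mul_prod_erase T.attach (fun b' => (x b').den) (Finset.mem_attach _ b)).symm
  have hDmem : D ∈ 𝒜 Δ := SetLike.prod_mem_graded 𝒜 _ _ fun b _ => (x b).den_mem_deg
  have hDbmem : ∀ b, Db b ∈ 𝒜 (δ b) := fun b =>
    SetLike.prod_mem_graded 𝒜 _ _ fun b' _ => (x b').den_mem_deg
  have hDp : D ∈ 𝔭.primeCompl := Submonoid.prod_mem _ fun b _ => (x b).den_mem
  have hDbp : ∀ b, Db b ∈ 𝔭.primeCompl := fun b =>
    Submonoid.prod_mem _ fun b' _ => (x b').den_mem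
  -- key cancellation lemmas
  have hmk1 : ∀ s : S, algebraMap S B' s = Localization.mk s 1 := fun s =>
    (Localization.mk_one_eq_algebraMap s).symm
  have key : ∀ y : A', φ y * algebraMap S B' y.den = algebraMap S B' y.num := by
    intro y
    rw [hφ, HomogeneousLocalization.algebraMap_apply, eq_num_div_den, hmk1, hmk1,
      Localization.mk_mul]
    rw [Localization.mk_eq_mk_iff]
    exact Localization.r_iff_exists.mpr ⟨1, by simp; ring⟩
  -- the equation in B'
  have claim : algebraMap S B' ((u : S) * (n * D)) =
      algebraMap S B' (∑ b ∈ T.attach, r b * ((x b).num * (d * Db b))) := by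
    have e1 : φ a = ∑ b ∈ T.attach, c (b : B') * (b : B') := by
      rw [← hsum]
      rw [Finsupp.sum, ← Finset.sum_attach T (fun b => c b • b)]
      exact Finset.sum_congr rfl fun b _ => by rw [smul_eq_mul]
    calc algebraMap S B' ((u : S) * (n * D))
        = algebraMap S B' (u : S) * (algebraMap S B' n * algebraMap S B' D) := by
          rw [map_mul, map_mul]
      _ = algebraMap S B' (u : S) * ((φ a * algebraMap S B' d) * algebraMap S B' D) := by
          rw [key a]
      _ = (algebraMap S B' (u : S) * φ a) * algebraMap S B' (d * D) := by
          rw [map_mul]; ring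
      _ = (∑ b ∈ T.attach, algebraMap S B' (r b) * φ (x b)) * algebraMap S B' (d * D) := by
          rw [e1, Finset.mul_sum]
          congr 1
          refine Finset.sum_congr rfl fun b _ => ?_
          rw [hr b, Algebra.smul_def, hxφ b, mul_assoc]
      _ = ∑ b ∈ T.attach, algebraMap S B' (r b * ((x b).num * (d * Db b))) := by
          rw [Finset.sum_mul]
          refine Finset.sum_congr rfl fun b _ => ?_
          rw [hDsplit b]
          rw [show d * ((x b).den * Db b) = (x b).den * (d * Db b) by ring, map_mul, map_mul,
            map_mul, map_mul]
          calc algebraMap S B' (r b) * φ (x b) *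
                (algebraMap S B' (x b).den * (algebraMap S B' d * algebraMap S B' (Db b)))
              = algebraMap S B' (r b) * ((φ (x b) * algebraMap S B' (x b).den) *
                (algebraMap S B' d * algebraMap S B' (Db b))) := by ring
            _ = _ := by rw [key (x b), map_mul]
      _ = _ := by rw [map_sum]
  obtain ⟨v, hv⟩ := (IsLocalization.eq_iff_exists 𝔭.primeCompl B').mp claim
  -- pick a good homogeneous component of v*u
  have hvu : (v : S) * (u : S) ∉ 𝔭 := (v * u).2
  obtain ⟨e₀, he₀⟩ := exists_component_not_mem hhom hvu
  set κ := e₀ + (a.deg + Δ) with hκ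
  -- rearrange hv
  have hv2 : ((v : S) * (u : S)) * (n * D) =
      ∑ b ∈ T.attach, ((v : S) * r b) * ((x b).num * (d * Db b)) := by
    calc ((v : S) * (u : S)) * (n * D) = (v : S) * ((u : S) * (n * D)) := by ring
      _ = (v : S) * (∑ b ∈ T.attach, r b * ((x b).num * (d * Db b))) := hv
      _ = _ := by rw [Finset.mul_sum]; exact Finset.sum_congr rfl fun b _ => by ring
  -- project
  have hproj := congrArg (GradedRing.proj 𝒜 κ) hv2
  rw [map_sum] at hproj
  have hnD : n * D ∈ 𝒜 (a.deg + Δ) := SetLike.mul_mem_graded a.num_mem_deg hDmem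
  have hxmem : ∀ b, (x b).num * (d * Db b) ∈ 𝒜 (a.deg + Δ) := by
    intro b
    have h1 : (x b).num * (d * Db b) ∈ 𝒜 ((x b).deg + (a.deg + δ b)) :=
      SetLike.mul_mem_graded (x b).num_mem_deg
        (SetLike.mul_mem_graded a.den_mem_deg (hDbmem b))
    rwa [show (x b).deg + (a.deg + δ b) = a.deg + ((x b).deg + δ b) by ring, hδΔ b] at h1
  rw [GradedRing.proj_apply, hκ, coe_decompose_mul_add_of_right_mem 𝒜 hnD] at hproj
  have hproj2 : ∀ b ∈ T.attach, GradedRing.proj 𝒜 κ (((v : S) * r b) * ((x b).num * (d * Db b)))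
      = (decompose 𝒜 ((v : S) * r b) e₀ : S) * ((x b).num * (d * Db b)) := by
    intro b _
    rw [GradedRing.proj_apply, hκ, coe_decompose_mul_add_of_right_mem 𝒜 (hxmem b)]
  rw [Finset.sum_congr rfl hproj2] at hproj
  -- hproj : (decompose (v*u) e₀ : S) * (n * D) = ∑ b, (decompose (v * r b) e₀ : S) * (...)
  set c₀ : 𝒜 e₀ := decompose 𝒜 ((v : S) * (u : S)) e₀ with hc₀
  set w : {x // x ∈ T} → 𝒜 e₀ := fun b => decompose 𝒜 ((v : S) * r b) e₀ with hw
  have hc₀p : (c₀ : S) ∈ 𝔭.primeCompl := he₀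
  -- the degree-zero fractions
  have hznum : ∀ b, (w b : S) * (d * (Db b * (x b).den)) ∈ 𝒜 κ := by
    intro b
    have h1 : (w b : S) * (d * (Db b * (x b).den)) ∈
        𝒜 (e₀ + (a.deg + (δ b + (x b).deg))) :=
      SetLike.mul_mem_graded (w b).2 (SetLike.mul_mem_graded a.den_mem_deg
        (SetLike.mul_mem_graded (hDbmem b) (x b).den_mem_deg))
    rwa [show δ b + (x b).deg = Δ by rw [← hδΔ b]; ring] at h1
  have hzden : (c₀ : S) * (d * D) ∈ 𝒜 κ :=
    SetLike.mul_mem_graded c₀.2 (SetLike.mul_mem_graded a.den_mem_deg hDmem)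
  have hzdenp : (c₀ : S) * (d * D) ∈ 𝔭.primeCompl :=
    Submonoid.mul_mem _ hc₀p (Submonoid.mul_mem _ a.den_mem hDp)
  set z : {x // x ∈ T} → A' := fun b => HomogeneousLocalization.mk
    ⟨κ, ⟨(w b : S) * (d * (Db b * (x b).den)), hznum b⟩,
      ⟨(c₀ : S) * (d * D), hzden⟩, hzdenp⟩ with hz
  -- final identity
  have final : a = ∑ b ∈ T.attach, x b * z b := by
    apply HomogeneousLocalization.val_injective
    rw [show (∑ b ∈ T.attach, x b * z b).val
        = φ (∑ b ∈ T.attach, x b * z b) from rfl]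
    rw [map_sum]
    have term : ∀ b ∈ T.attach, φ (x b * z b) =
        Localization.mk ((w b : S) * ((x b).num * (d * Db b)))
          ⟨(c₀ : S) * (d * D), hzdenp⟩ := by
      intro b _
      rw [map_mul, hφ, HomogeneousLocalization.algebraMap_apply,
        HomogeneousLocalization.algebraMap_apply, eq_num_div_den, hz]
      rw [HomogeneousLocalization.val_mk]
      rw [Localization.mk_mul, Localization.mk_eq_mk_iff]
      refine Localization.r_iff_exists.mpr ⟨1, ?_⟩
      simp only [Submonoid.coe_mul, OneMemClass.coe_one, one_mul]
      ring
    rw [Finset.sum_congr rfl term, ← Localization.mk_sum, ← hproj]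
    rw [eq_num_div_den]
    rw [Localization.mk_eq_mk_iff]
    refine Localization.r_iff_exists.mpr ⟨1, ?_⟩
    simp only [Submonoid.coe_mul, OneMemClass.coe_one, one_mul]
    ring
  rw [final]
  exact Ideal.sum_mem _ fun b _ => I.mul_mem_right _ (hxI b)


lemma map_maximalIdeal_homloc (hhom : 𝔭.IsHomogeneous 𝒜) (hdeg1 : ∃ a ∈ 𝒜 1, a ∉ 𝔭) :
    (IsLocalRing.maximalIdeal (HomogeneousLocalization.AtPrime 𝒜 𝔭)).map
        (algebraMap (HomogeneousLocalization.AtPrime 𝒜 𝔭) (Localization.AtPrime 𝔭))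
      = IsLocalRing.maximalIdeal (Localization.AtPrime 𝔭) := by
  classical
  set A' := HomogeneousLocalization.AtPrime 𝒜 𝔭 with hA'
  set B' := Localization.AtPrime 𝔭 with hB'
  set φ : A' →+* B' := (algebraMap A' B' : A' →+* B') with hφ
  obtain ⟨f, hf1, hfp⟩ := hdeg1
  refine le_antisymm ?_ ?_
  · rw [Ideal.map_le_iff_le_comap]
    intro y hy
    rw [Ideal.mem_comap]
    rw [IsLocalRing.mem_maximalIdeal, mem_nonunits_iff] at hy ⊢
    intro hu
    exact hy ((HomogeneousLocalization.isUnit_iff_isUnit_val 𝒜 𝔭 y).mp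
      (by rwa [hφ, HomogeneousLocalization.algebraMap_apply] at hu))
  · rw [← Localization.AtPrime.map_eq_maximalIdeal, Ideal.map_le_iff_le_comap]
    intro p hp
    rw [Ideal.mem_comap]
    rw [← DirectSum.sum_support_decompose 𝒜 p, map_sum]
    refine Ideal.sum_mem _ fun i _ => ?_
    set q : S := (decompose 𝒜 p i : S) with hq
    have hqp : q ∈ 𝔭 := hhom i hp
    have hqi : q ∈ 𝒜 i := (decompose 𝒜 p i).2
    have hfi : f ^ i ∈ 𝔭.primeCompl := pow_mem hfp i
    have hfim : f ^ i ∈ 𝒜 i := by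
      simpa using SetLike.pow_mem_graded i hf1
    set ξ : A' := HomogeneousLocalization.mk ⟨i, ⟨q, hqi⟩, ⟨f ^ i, hfim⟩, hfi⟩ with hξ
    have hξm : ξ ∈ IsLocalRing.maximalIdeal A' := by
      rw [IsLocalRing.mem_maximalIdeal, mem_nonunits_iff]
      intro hu
      have := (HomogeneousLocalization.isUnit_iff_isUnit_val 𝒜 𝔭 ξ).mpr hu
      rw [hξ, HomogeneousLocalization.val_mk] at this
      have heq : (Localization.mk q ⟨f ^ i, hfi⟩ : B') *
          algebraMap S B' (f ^ i) = algebraMap S B' q := by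
        rw [← Localization.mk_one_eq_algebraMap, ← Localization.mk_one_eq_algebraMap,
          Localization.mk_mul, Localization.mk_eq_mk_iff]
        exact Localization.r_iff_exists.mpr ⟨1, by simp; ring⟩
      have hunit : IsUnit (algebraMap S B' q) := by
        rw [← heq]
        exact this.mul (IsLocalization.map_units B' (⟨f ^ i, hfi⟩ : 𝔭.primeCompl))
      rw [IsLocalization.AtPrime.isUnit_to_map_iff B' 𝔭 q] at hunit
      exact hunit hqp
    have hval : algebraMap S B' q = φ ξ * algebraMap S B' (f ^ i) := by
      rw [hφ, HomogeneousLocalization.algebraMap_apply, hξ, HomogeneousLocalization.val_mk]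
      rw [← Localization.mk_one_eq_algebraMap, ← Localization.mk_one_eq_algebraMap,
        Localization.mk_mul, Localization.mk_eq_mk_iff]
      exact Localization.r_iff_exists.mpr ⟨1, by simp; ring⟩
    rw [hval]
    exact Ideal.mul_mem_right _ _ (Ideal.mem_map_of_mem φ hξm)

end Graded



/-- The length of a module `M` over a ring `R`, valued in `ℕ∞`: the Krull dimension of the
lattice of submodules of `M`. -/
noncomputable def moduleLength (R M : Type*) [Ring R] [AddCommGroup M] [Module R M] : ℕ∞ :=
  WithBot.unbotD 0 (Order.krullDim (Submodule R M))

/-- Let `S` be a commutative Noetherian ring with an `ℕ`-grading `𝒜`, and let `𝔭 ⊆ S` be a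
homogeneous prime which is a minimal prime of `S` and such that some homogeneous element of
degree `1` does not belong to `𝔭`.  Then the length of the localization `S_𝔭` as a module over
itself equals the length of the homogeneous localization `S_(𝔭)` as a module over itself. -/
theorem length_localization_eq_length_homogeneousLocalization
    {S : Type*} [CommRing S] [IsNoetherianRing S]
    (𝒜 : ℕ → Submodule ℤ S) [GradedRing 𝒜]
    (𝔭 : Ideal S) [𝔭.IsPrime]
    (hhom : 𝔭.IsHomogeneous 𝒜)
    (hmin : 𝔭 ∈ minimalPrimes S)
    (hdeg1 : ∃ a ∈ 𝒜 1, a ∉ 𝔭) :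
    moduleLength (Localization.AtPrime 𝔭) (Localization.AtPrime 𝔭) =
      moduleLength (HomogeneousLocalization.AtPrime 𝒜 𝔭)
        (HomogeneousLocalization.AtPrime 𝒜 𝔭) := by
  classical
  set A' := HomogeneousLocalization.AtPrime 𝒜 𝔭 with hA'
  set B' := Localization.AtPrime 𝔭 with hB'
  set φ : A' →+* B' := (algebraMap A' B' : A' →+* B') with hφ
  have hcomap : ∀ I : Ideal A', (I.map φ).comap φ = I := fun I => comap_map_algebraMap hhom I
  have hmax : (IsLocalRing.maximalIdeal A').map φ = IsLocalRing.maximalIdeal B' :=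
    map_maximalIdeal_homloc hhom hdeg1
  suffices h : Order.krullDim (Submodule B' B') = Order.krullDim (Submodule A' A') by
    unfold moduleLength
    rw [h]
  have hAB : Order.krullDim (Submodule A' A') ≤ Order.krullDim (Submodule B' B') :=
    Order.krullDim_le_of_strictMono (fun I : Ideal A' => I.map φ)
      (fun {I J} h => lt_of_le_of_ne (Ideal.map_mono h.le)
        (fun e => h.ne (by rw [← hcomap I, ← hcomap J]; exact congrArg (Ideal.comap φ) e)))
  refine le_antisymm ?_ hAB
  by_cases htop : Order.krullDim (Submodule A' A') = ⊤
  · rw [htop]; exact le_top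
  -- krullDim A' is a finite natural number
  have hnonneg : (0 : WithBot ℕ∞) ≤ Order.krullDim (Submodule A' A') :=
    Order.krullDim_nonneg
  obtain ⟨n, hn⟩ : ∃ n : ℕ, Order.krullDim (Submodule A' A') = (n : WithBot ℕ∞) := by
    rcases hd : Order.krullDim (Submodule A' A') with _ | m
    · rw [hd] at hnonneg; exact absurd (le_bot_iff.mp hnonneg) (by simp)
    · rcases m with _ | k
      · exact absurd hd htop
      · exact ⟨k, rfl⟩
  -- all chains in Ideal A' have length ≤ n
  have hbound : ∀ p : LTSeries (Ideal A'), p.length ≤ n := by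
    intro p
    have := Order.LTSeries.length_le_krullDim p
    rw [hn] at this
    exact_mod_cast this
  -- a longest chain exists
  have hS : (Set.range fun p : LTSeries (Ideal A') => p.length).Nonempty :=
    ⟨(RelSeries.singleton _ ⊥).length, ⟨_, rfl⟩⟩
  have hBdd : BddAbove (Set.range fun p : LTSeries (Ideal A') => p.length) :=
    ⟨n, by rintro k ⟨p, rfl⟩; exact hbound p⟩
  obtain ⟨q, hq⟩ := Nat.sSup_mem hS hBdd
  have hq2 : q.length = sSup (Set.range fun p : LTSeries (Ideal A') => p.length) := hq
  have hqmax : ∀ p : LTSeries (Ideal A'), p.length ≤ q.length := by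
    intro p
    rw [hq2]
    exact le_csSup hBdd ⟨p, rfl⟩
  -- the longest chain is a composition series
  have hqhead : q.head = ⊥ := by
    by_contra h
    have := hqmax (q.cons ⊥ (Ne.bot_lt' fun e => h e.symm))
    simp [RelSeries.cons_length] at this
  have hqlast : q.last = ⊤ := by
    by_contra h
    have := hqmax (q.snoc ⊤ (lt_top_iff_ne_top.mpr h))
    simp [RelSeries.snoc_length] at this
  have hqcov : ∀ i : Fin q.length, q.toFun i.castSucc ⋖ q.toFun i.succ := by
    intro i
    by_contra hc
    obtain ⟨c, h1, h2⟩ := exists_lt_lt_of_not_covBy (q.step i) hc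
    have := hqmax (q.insertNth i c h1 h2)
    simp [RelSeries.insertNth] at this
  -- transfer the composition series to B'
  set cB : ℕ → Ideal B' := fun i =>
    if h : i ≤ q.length then (q.toFun ⟨i, by omega⟩).map φ else ⊤ with hcB
  have hcB0 : cB 0 = ⊥ := by
    rw [hcB]
    simp only [dif_pos (Nat.zero_le _)]
    have : q.toFun ⟨0, by omega⟩ = ⊥ := hqhead
    rw [this, Ideal.map_bot]
  have hcBstep : ∀ i < q.length, cB i ⋖ cB (i + 1) := by
    intro i hi
    rw [hcB]
    simp only [dif_pos (by omega : i ≤ q.length), dif_pos (by omega : i + 1 ≤ q.length)]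
    exact Ideal.map_covBy_map φ hcomap hmax (hqcov ⟨i, hi⟩)
  have hcBlast : cB q.length = ⊤ := by
    rw [hcB]
    simp only [dif_pos (le_refl _)]
    have : q.toFun ⟨q.length, by omega⟩ = ⊤ := hqlast
    rw [this, Ideal.map_top]
  have hboundB : ∀ p : LTSeries (Ideal B'), p.length ≤ q.length := fun p =>
    LTSeries.length_le_of_covby_chain cB hcB0 q.length hcBstep p (hcBlast ▸ le_top)
  -- conclude
  rw [Order.krullDim_eq_iSup_length]
  have h1 : (⨆ p : LTSeries (Submodule B' B'), (p.length : ℕ∞)) ≤ (q.length : ℕ∞) :=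
    iSup_le fun p => by exact_mod_cast hboundB p
  calc ((⨆ p : LTSeries (Submodule B' B'), (p.length : ℕ∞) : ℕ∞) : WithBot ℕ∞)
      ≤ ((q.length : ℕ∞) : WithBot ℕ∞) := by exact_mod_cast h1
    _ ≤ Order.krullDim (Submodule A' A') := Order.LTSeries.length_le_krullDim q
end
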